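/- arXiv:2603.09119 — 2 statements merged into one kernel-verified Lean document; each statement's English description precedes it below -/
import Mathlib

section
/- Fix positive integers d, r, c and a d-RSK growth diagram (P, m) on the r×c rectangle. Let λ^{(0)}, λ^{(1)}, …, λ^{(r+c)} be the sequence of d-partitions along the outer boundary, defined by λ^{(j)} = P(r, j) for 0 ≤ j ≤ c and λ^{(c+i)} = P(r−i, c) for 1 ≤ i ≤ r. Then the maximum length of an NE-chain in the filling m equals max_{1 ≤ i ≤ r+c} MCW_d(λ^{(i−1)}, λ^{(i)}), where for d-partitions with α ≺ β one sets MCW_d(α,β) = MCW_d(β,α) = β_1 − α_d (both maxima being 0 if taken over an empty collection of nonzero values). -/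
/-- `α ≺ β`: `β₁ ≥ α₁ ≥ β₂ ≥ α₂ ≥ ⋯ ≥ β_d ≥ α_d` (0-indexed). -/
def Interlace (d : ℕ) (α β : Fin d → ℕ) : Prop :=
  (∀ i, α i ≤ β i) ∧ ∀ i : Fin d, ∀ h : (i : ℕ) + 1 < d, β ⟨(i : ℕ) + 1, h⟩ ≤ α i

/-- `(P, m)` is a `d`-RSK growth diagram on the `r×c` rectangle: `P` assigns a
`d`-partition to each lattice point, vanishing on the axes, `m` assigns an entry to each
cell, and every cell—with corners `κ = P(x-1,y-1)`, `μ = P(x-1,y)`, `ν = P(x,y-1)`,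
`ρ = P(x,y)` and entry `m`—satisfies the `d`-RSK local rule. -/
def IsDRSKGrowth (d r c : ℕ) (P : Fin (r + 1) → Fin (c + 1) → Fin d → ℕ)
    (m : Fin r → Fin c → ℕ) : Prop :=
  (∀ x y, Antitone (P x y)) ∧
  (∀ x, P x 0 = fun _ => 0) ∧
  (∀ y, P 0 y = fun _ => 0) ∧
  ∀ (x : Fin r) (y : Fin c),
    Interlace d (P x.castSucc y.castSucc) (P x.castSucc y.succ) ∧
    Interlace d (P x.castSucc y.castSucc) (P x.succ y.castSucc) ∧
    Interlace d (P x.castSucc y.succ) (P x.succ y.succ) ∧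
    Interlace d (P x.succ y.castSucc) (P x.succ y.succ) ∧
    (m x y = 0 ∨ ∀ h : 0 < d, P x.castSucc y.castSucc ⟨d - 1, Nat.sub_lt h Nat.one_pos⟩ = 0) ∧
    (∀ h : 0 < d,
      P x.succ y.succ ⟨0, h⟩ + P x.castSucc y.castSucc ⟨d - 1, Nat.sub_lt h Nat.one_pos⟩ =
        m x y +
          min (P x.castSucc y.succ ⟨d - 1, Nat.sub_lt h Nat.one_pos⟩)
              (P x.succ y.castSucc ⟨d - 1, Nat.sub_lt h Nat.one_pos⟩) +
          max (P x.castSucc y.succ ⟨0, h⟩) (P x.succ y.castSucc ⟨0, h⟩)) ∧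
    ∀ i : Fin d, 0 < (i : ℕ) →
      P x.succ y.succ i +
          P x.castSucc y.castSucc ⟨(i : ℕ) - 1, lt_of_le_of_lt (Nat.sub_le _ _) i.isLt⟩ =
        min (P x.castSucc y.succ ⟨(i : ℕ) - 1, lt_of_le_of_lt (Nat.sub_le _ _) i.isLt⟩)
            (P x.succ y.castSucc ⟨(i : ℕ) - 1, lt_of_le_of_lt (Nat.sub_le _ _) i.isLt⟩) +
          max (P x.castSucc y.succ i) (P x.succ y.castSucc i)

namespace DRSK

variable {d r c : ℕ}

/-- `P` evaluated at clamped natural coordinates. -/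
def pt (P : Fin (r + 1) → Fin (c + 1) → Fin d → ℕ) (x y : ℕ) : Fin d → ℕ :=
  P ⟨min x r, by omega⟩ ⟨min y c, by omega⟩

def a1 (hd : 0 < d) (P : Fin (r + 1) → Fin (c + 1) → Fin d → ℕ) (x y : ℕ) : ℕ :=
  pt P x y ⟨0, hd⟩

def ad (hd : 0 < d) (P : Fin (r + 1) → Fin (c + 1) → Fin d → ℕ) (x y : ℕ) : ℕ :=
  pt P x y ⟨d - 1, Nat.sub_lt hd Nat.one_pos⟩

/-- weight of the vertical edge of column `x` between heights `y` and `y+1`. -/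
def ve (hd : 0 < d) (P : Fin (r + 1) → Fin (c + 1) → Fin d → ℕ) (x y : ℕ) : ℕ :=
  a1 hd P x (y + 1) - ad hd P x y

/-- weight of the horizontal edge of row `y` between columns `x` and `x+1`. -/
def he (hd : 0 < d) (P : Fin (r + 1) → Fin (c + 1) → Fin d → ℕ) (x y : ℕ) : ℕ :=
  a1 hd P (x + 1) y - ad hd P x y

def Vv (hd : 0 < d) (P : Fin (r + 1) → Fin (c + 1) → Fin d → ℕ) (x y : ℕ) : ℕ :=
  (Finset.range y).sup (ve hd P x)

def Hh (hd : 0 < d) (P : Fin (r + 1) → Fin (c + 1) → Fin d → ℕ) (x y : ℕ) : ℕ :=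
  (Finset.range x).sup (fun i => he hd P i y)

def Ww (hd : 0 < d) (P : Fin (r + 1) → Fin (c + 1) → Fin d → ℕ) (x y : ℕ) : ℕ :=
  max (Vv hd P x y) (Hh hd P x y)

section
variable (hd : 0 < d) (P : Fin (r + 1) → Fin (c + 1) → Fin d → ℕ) (m : Fin r → Fin c → ℕ)

lemma pt_eq {x y : ℕ} (hx : x ≤ r) (hy : y ≤ c) :
    pt P x y = P ⟨x, by omega⟩ ⟨y, by omega⟩ := by
  simp only [pt, Nat.min_eq_left hx, Nat.min_eq_left hy]

variable (hPm : IsDRSKGrowth d r c P m)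
include hPm

lemma pt_zero_left (y : ℕ) : pt P 0 y = fun _ => 0 := by
  have h0 : (⟨min 0 r, by omega⟩ : Fin (r+1)) = 0 := by
    exact Fin.ext (by simp)
  simp only [pt, h0]
  exact hPm.2.2.1 _

lemma pt_zero_right (x : ℕ) : pt P x 0 = fun _ => 0 := by
  have h0 : (⟨min 0 c, by omega⟩ : Fin (c+1)) = 0 := Fin.ext (by simp)
  simp only [pt, h0]
  exact hPm.2.1 _

lemma pt_anti (x y : ℕ) : ad hd P x y ≤ a1 hd P x y :=
  hPm.1 _ _ (by simp)

lemma col_inter {x y : ℕ} (hx : x ≤ r) (hy : y < c) :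
    Interlace d (pt P x y) (pt P x (y + 1)) := by
  rcases Nat.eq_zero_or_pos x with h | h
  · subst h
    rw [pt_zero_left P m hPm, pt_zero_left P m hPm]
    exact ⟨fun i => le_rfl, fun i h => le_rfl⟩
  · obtain ⟨x', rfl⟩ : ∃ x', x = x' + 1 := ⟨x - 1, by omega⟩
    have := (hPm.2.2.2 ⟨x', by omega⟩ ⟨y, hy⟩).2.2.2.1
    rw [pt_eq P hx (by omega), pt_eq P hx (by omega)]
    simpa [Fin.succ_mk, Fin.castSucc_mk] using this

lemma row_inter {x y : ℕ} (hx : x < r) (hy : y ≤ c) :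
    Interlace d (pt P x y) (pt P (x + 1) y) := by
  rcases Nat.eq_zero_or_pos y with h | h
  · subst h
    rw [pt_zero_right P m hPm, pt_zero_right P m hPm]
    exact ⟨fun i => le_rfl, fun i h => le_rfl⟩
  · obtain ⟨y', rfl⟩ : ∃ y', y = y' + 1 := ⟨y - 1, by omega⟩
    have := (hPm.2.2.2 ⟨x, hx⟩ ⟨y', by omega⟩).2.2.1
    rw [pt_eq P (by omega) hy, pt_eq P (by omega) hy]
    simpa [Fin.succ_mk, Fin.castSucc_mk] using this

lemma cell_rule {x y : ℕ} (hx : x < r) (hy : y < c) :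
    a1 hd P (x+1) (y+1) + ad hd P x y =
      m ⟨x, hx⟩ ⟨y, hy⟩ + min (ad hd P x (y+1)) (ad hd P (x+1) y)
        + max (a1 hd P x (y+1)) (a1 hd P (x+1) y) := by
  have h := (hPm.2.2.2 ⟨x, hx⟩ ⟨y, hy⟩).2.2.2.2.2.1 hd
  simp only [a1, ad, pt_eq P (by omega : x ≤ r) (by omega : y ≤ c),
    pt_eq P (by omega : x ≤ r) (by omega : y + 1 ≤ c),
    pt_eq P (by omega : x + 1 ≤ r) (by omega : y ≤ c),
    pt_eq P (by omega : x + 1 ≤ r) (by omega : y + 1 ≤ c)]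
  simpa [Fin.succ_mk, Fin.castSucc_mk] using h

lemma cell_zero {x y : ℕ} (hx : x < r) (hy : y < c) :
    m ⟨x, hx⟩ ⟨y, hy⟩ = 0 ∨ ad hd P x y = 0 := by
  have h := (hPm.2.2.2 ⟨x, hx⟩ ⟨y, hy⟩).2.2.2.2.1
  rcases h with h | h
  · exact Or.inl h
  · right
    have := h hd
    simp only [ad, pt_eq P (by omega : x ≤ r) (by omega : y ≤ c)]
    simpa [Fin.castSucc_mk] using this

lemma cellL1 {x y : ℕ} (hx : x < r) (hy : y < c) :
    max (he hd P x (y+1)) (ve hd P (x+1) y)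
      = m ⟨x, hx⟩ ⟨y, hy⟩ + max (ve hd P x y) (he hd P x y) := by
  have hrule := cell_rule hd P m hPm hx hy
  have h1 : a1 hd P x y ≤ a1 hd P x (y+1) := (col_inter P m hPm (by omega) hy).1 ⟨0, hd⟩
  have h2 : ad hd P x y ≤ ad hd P x (y+1) :=
    (col_inter P m hPm (by omega) hy).1 ⟨d-1, Nat.sub_lt hd Nat.one_pos⟩
  have h3 : a1 hd P x y ≤ a1 hd P (x+1) y := (row_inter P m hPm hx (by omega)).1 ⟨0, hd⟩
  have h4 : ad hd P x y ≤ ad hd P (x+1) y :=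
    (row_inter P m hPm hx (by omega)).1 ⟨d-1, Nat.sub_lt hd Nat.one_pos⟩
  have h5 : a1 hd P x (y+1) ≤ a1 hd P (x+1) (y+1) :=
    (row_inter P m hPm hx (by omega)).1 ⟨0, hd⟩
  have h6 : a1 hd P (x+1) y ≤ a1 hd P (x+1) (y+1) :=
    (col_inter P m hPm (by omega) hy).1 ⟨0, hd⟩
  have h7 := pt_anti P m hPm (hd := hd) x y
  have h8 := pt_anti P m hPm (hd := hd) x (y+1)
  have h9 := pt_anti P m hPm (hd := hd) (x+1) y
  simp only [he, ve]
  omega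

lemma V_step {x : ℕ} (hx : x < r) :
    ∀ y, y ≤ c → Vv hd P x y ≤ max (Vv hd P (x+1) y) (he hd P x y)
  | 0, _ => by simp [Vv]
  | (y+1), hy => by
    have ih := V_step hx y (by omega)
    have hL1 := cellL1 hd P m hPm hx (by omega : y < c)
    have e1 : Vv hd P x (y+1) = max (ve hd P x y) (Vv hd P x y) := by
      simp [Vv, Finset.range_add_one]
    have e2 : Vv hd P (x+1) (y+1) = max (ve hd P (x+1) y) (Vv hd P (x+1) y) := by
      simp [Vv, Finset.range_add_one]
    omega

lemma H_step {y : ℕ} (hy : y < c) :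
    ∀ x, x ≤ r → Hh hd P x y ≤ max (Hh hd P x (y+1)) (ve hd P x y)
  | 0, _ => by simp [Hh]
  | (x+1), hx => by
    have ih := H_step hy x (by omega)
    have hL1 := cellL1 hd P m hPm (by omega : x < r) hy
    have e1 : Hh hd P (x+1) y = max (he hd P x y) (Hh hd P x y) := by
      simp [Hh, Finset.range_add_one]
    have e2 : Hh hd P (x+1) (y+1) = max (he hd P x (y+1)) (Hh hd P x (y+1)) := by
      simp [Hh, Finset.range_add_one]
    omega

lemma a1_col_mono {x : ℕ} (hx : x ≤ r) : ∀ {j y : ℕ}, j ≤ y → y ≤ c →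
    a1 hd P x j ≤ a1 hd P x y := by
  intro j y h hy
  induction y with
  | zero =>
    obtain rfl : j = 0 := by omega
    exact le_rfl
  | succ y ih =>
    rcases Nat.lt_or_ge j (y+1) with h' | h'
    · exact le_trans (ih (by omega) (by omega)) ((col_inter P m hPm hx (by omega)).1 ⟨0, hd⟩)
    · obtain rfl : j = y + 1 := by omega
      exact le_rfl

lemma a1_row_mono {y : ℕ} (hy : y ≤ c) : ∀ {j x : ℕ}, j ≤ x → x ≤ r →
    a1 hd P j y ≤ a1 hd P x y := by
  intro j x h hx
  induction x with
  | zero =>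
    obtain rfl : j = 0 := by omega
    exact le_rfl
  | succ x ih =>
    rcases Nat.lt_or_ge j (x+1) with h' | h'
    · exact le_trans (ih (by omega) (by omega)) ((row_inter P m hPm (by omega) hy).1 ⟨0, hd⟩)
    · obtain rfl : j = x + 1 := by omega
      exact le_rfl

lemma Wbound {x y : ℕ} (hx : x ≤ r) (hy : y ≤ c) :
    Ww hd P x y ≤ a1 hd P x y := by
  refine max_le (Finset.sup_le fun j hj => ?_) (Finset.sup_le fun i hi => ?_)
  · rw [Finset.mem_range] at hj
    exact le_trans (Nat.sub_le _ _) (a1_col_mono hd P m hPm hx (by omega) hy)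
  · rw [Finset.mem_range] at hi
    exact le_trans (Nat.sub_le _ _) (a1_row_mono hd P m hPm hy (by omega) hx)


lemma Ww_zero_left {y : ℕ} (hy : y ≤ c) : Ww hd P 0 y = 0 := by
  have h1 : Vv hd P 0 y = 0 := by
    refine Nat.le_zero.mp (Finset.sup_le fun j hj => ?_)
    have : a1 hd P 0 (j+1) = 0 := by
      have := pt_zero_left P m hPm (j+1)
      simp only [a1, this]
    simp [ve, this]
  have h2 : Hh hd P 0 y = 0 := by simp [Hh]
  simp [Ww, h1, h2]

lemma Ww_zero_right {x : ℕ} (hx : x ≤ r) : Ww hd P x 0 = 0 := by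
  have h1 : Hh hd P x 0 = 0 := by
    refine Nat.le_zero.mp (Finset.sup_le fun i hi => ?_)
    have : a1 hd P (i+1) 0 = 0 := by
      have := pt_zero_right P m hPm (i+1)
      simp only [a1, this]
    simp [he, this]
  have h2 : Vv hd P x 0 = 0 := by simp [Vv]
  simp [Ww, h1, h2]

set_option maxHeartbeats 2000000 in
lemma Wrec {x y : ℕ} (hx : x < r) (hy : y < c) :
    Ww hd P (x+1) (y+1)
      = m ⟨x, hx⟩ ⟨y, hy⟩ + max (Ww hd P x (y+1)) (Ww hd P (x+1) y) := by
  have hL1 := cellL1 hd P m hPm hx hy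
  have eV1 : Vv hd P (x+1) (y+1) = max (ve hd P (x+1) y) (Vv hd P (x+1) y) := by
    simp [Vv, Finset.range_add_one]
  have eV2 : Vv hd P x (y+1) = max (ve hd P x y) (Vv hd P x y) := by
    simp [Vv, Finset.range_add_one]
  have eH1 : Hh hd P (x+1) (y+1) = max (he hd P x (y+1)) (Hh hd P x (y+1)) := by
    simp [Hh, Finset.range_add_one]
  have eH2 : Hh hd P (x+1) y = max (he hd P x y) (Hh hd P x y) := by
    simp [Hh, Finset.range_add_one]
  rcases cell_zero hd P m hPm hx hy with hz | hz
  · have hVs := V_step hd P m hPm hx y (by omega)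
    have hHs := H_step hd P m hPm hy x (by omega)
    simp only [Ww]
    omega
  · have hW1 : max (Vv hd P x (y+1)) (Hh hd P x (y+1)) ≤ a1 hd P x (y+1) :=
      Wbound hd P m hPm (by omega) (by omega)
    have hW2 : max (Vv hd P (x+1) y) (Hh hd P (x+1) y) ≤ a1 hd P (x+1) y :=
      Wbound hd P m hPm (by omega) (by omega)
    have hW3 : max (Vv hd P x y) (Hh hd P x y) ≤ a1 hd P x y :=
      Wbound hd P m hPm (by omega) (by omega)
    have hk : a1 hd P x y ≤ a1 hd P x (y+1) := (col_inter P m hPm (by omega) hy).1 ⟨0, hd⟩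
    have hf1 : ve hd P x y = a1 hd P x (y+1) - ad hd P x y := rfl
    have hf2 : he hd P x y = a1 hd P (x+1) y - ad hd P x y := rfl
    simp only [Ww]
    omega

lemma Wmono_right {x y : ℕ} (hx : x ≤ r) (hy : y < c) :
    Ww hd P x y ≤ Ww hd P x (y+1) := by
  rcases Nat.eq_zero_or_pos x with h | h
  · subst h
    rw [Ww_zero_left hd P m hPm (by omega), Ww_zero_left hd P m hPm (by omega)]
  · obtain ⟨x', rfl⟩ : ∃ x', x = x' + 1 := ⟨x - 1, by omega⟩
    have := Wrec hd P m hPm (x := x') (y := y) (by omega) hy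
    omega

lemma Wmono_left {x y : ℕ} (hx : x < r) (hy : y ≤ c) :
    Ww hd P x y ≤ Ww hd P (x+1) y := by
  rcases Nat.eq_zero_or_pos y with h | h
  · subst h
    rw [Ww_zero_right hd P m hPm (by omega), Ww_zero_right hd P m hPm (by omega)]
  · obtain ⟨y', rfl⟩ : ∃ y', y = y' + 1 := ⟨y - 1, by omega⟩
    have := Wrec hd P m hPm (x := x) (y := y') hx (by omega)
    omega

lemma Wmono {x y x' y' : ℕ} (h1 : x ≤ x') (h2 : y ≤ y') (hx : x' ≤ r) (hy : y' ≤ c) :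
    Ww hd P x y ≤ Ww hd P x' y' := by
  have step1 : ∀ a b b' : ℕ, a ≤ r → b ≤ b' → b' ≤ c → Ww hd P a b ≤ Ww hd P a b' := by
    intro a b b' ha hb hb'
    induction b' with
    | zero =>
      obtain rfl : b = 0 := by omega
      exact le_rfl
    | succ b' ih =>
      rcases Nat.lt_or_ge b (b'+1) with h' | h'
      · exact le_trans (ih (by omega) (by omega)) (Wmono_right hd P m hPm ha (by omega))
      · obtain rfl : b = b' + 1 := by omega
        exact le_rfl
  have step2 : ∀ b a a' : ℕ, b ≤ c → a ≤ a' → a' ≤ r → Ww hd P a b ≤ Ww hd P a' b := by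
    intro b a a' hb ha ha'
    induction a' with
    | zero =>
      obtain rfl : a = 0 := by omega
      exact le_rfl
    | succ a' ih =>
      rcases Nat.lt_or_ge a (a'+1) with h' | h'
      · exact le_trans (ih (by omega) (by omega)) (Wmono_left hd P m hPm (by omega) hb)
      · obtain rfl : a = a' + 1 := by omega
        exact le_rfl
  exact le_trans (step1 x y y' (by omega) h2 hy) (step2 y' x x' hy h1 hx)


lemma chain_le : ∀ (K : ℕ) (X Y : ℕ), X ≤ r → Y ≤ c → ∀ s : Fin K → Fin r × Fin c,
    Function.Injective s →
    (∀ i j : Fin K, i ≤ j → (s i).1 ≤ (s j).1) →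
    (∀ i j : Fin K, i ≤ j → (s i).2 ≤ (s j).2) →
    (∀ i, ((s i).1 : ℕ) < X ∧ ((s i).2 : ℕ) < Y) →
    ∑ i, m (s i).1 (s i).2 ≤ Ww hd P X Y := by
  intro K
  induction K with
  | zero =>
    intro X Y _ _ s _ _ _ _
    simp
  | succ K ih =>
    intro X Y hX hY s hinj h1 h2 hbd
    set a := (s (Fin.last K)).1 with ha
    set b := (s (Fin.last K)).2 with hb
    have haX : (a : ℕ) < X := (hbd _).1
    have hbY : (b : ℕ) < Y := (hbd _).2
    have hsum : ∑ i, m (s i).1 (s i).2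
        = (∑ i : Fin K, m (s i.castSucc).1 (s i.castSucc).2) + m a b := by
      rw [Fin.sum_univ_castSucc]
    have hrec := Wrec hd P m hPm (x := (a : ℕ)) (y := (b : ℕ)) a.isLt b.isLt
    have hmab : m ⟨(a : ℕ), a.isLt⟩ ⟨(b : ℕ), b.isLt⟩ = m a b := by
      congr 1 <;> exact Fin.ext rfl
    have hWm : Ww hd P ((a : ℕ)+1) ((b : ℕ)+1) ≤ Ww hd P X Y :=
      Wmono hd P m hPm (by omega) (by omega) hX hY
    have hpre : (∑ i : Fin K, m (s i.castSucc).1 (s i.castSucc).2)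
        ≤ max (Ww hd P (a : ℕ) ((b : ℕ)+1)) (Ww hd P ((a : ℕ)+1) (b : ℕ)) := by
      rcases Nat.eq_zero_or_pos K with hK | hK
      · subst hK
        simp
      · obtain ⟨K', rfl⟩ : ∃ K', K = K' + 1 := ⟨K - 1, by omega⟩
        set p := (s (Fin.last K').castSucc).1 with hp
        set q := (s (Fin.last K').castSucc).2 with hq
        have hpa : p ≤ a := h1 _ _ (le_of_lt (Fin.castSucc_lt_last _))
        have hqb : q ≤ b := h2 _ _ (le_of_lt (Fin.castSucc_lt_last _))
        have hne : s (Fin.last K').castSucc ≠ s (Fin.last (K'+1)) := by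
          intro hcon
          have := hinj hcon
          simp [Fin.ext_iff] at this
        have hlt : (p : ℕ) < a ∨ (q : ℕ) < b := by
          by_contra hcon
          push_neg at hcon
          apply hne
          have hpa' : p = a := le_antisymm hpa (by exact_mod_cast hcon.1)
          have hqb' : q = b := le_antisymm hqb (by exact_mod_cast hcon.2)
          exact Prod.ext hpa' hqb'
        rcases hlt with hlt | hlt
        · refine le_trans (ih (a : ℕ) ((b : ℕ)+1) (by omega) (by omega) _
            (hinj.comp (Fin.castSucc_injective _))
            (fun i j hij => h1 _ _ (Fin.castSucc_le_castSucc_iff.mpr hij))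
            (fun i j hij => h2 _ _ (Fin.castSucc_le_castSucc_iff.mpr hij))
            (fun i => ?_)) (le_max_left _ _)
          constructor
          · have : (s i.castSucc).1 ≤ p := h1 _ _ (Fin.castSucc_le_castSucc_iff.mpr (Fin.le_last _))
            omega
          · have : (s i.castSucc).2 ≤ b := h2 _ _ (Fin.le_last _)
            have := this
            omega
        · refine le_trans (ih ((a : ℕ)+1) (b : ℕ) (by omega) (by omega) _
            (hinj.comp (Fin.castSucc_injective _))
            (fun i j hij => h1 _ _ (Fin.castSucc_le_castSucc_iff.mpr hij))
            (fun i j hij => h2 _ _ (Fin.castSucc_le_castSucc_iff.mpr hij))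
            (fun i => ?_)) (le_max_right _ _)
          constructor
          · have : (s i.castSucc).1 ≤ a := h1 _ _ (Fin.le_last _)
            omega
          · have : (s i.castSucc).2 ≤ q := h2 _ _ (Fin.castSucc_le_castSucc_iff.mpr (Fin.le_last _))
            omega
    omega


lemma chain_exists : ∀ (n X Y : ℕ), X + Y ≤ n → X ≤ r → Y ≤ c →
    ∃ (K : ℕ) (s : Fin K → Fin r × Fin c), Function.Injective s ∧
      (∀ i j : Fin K, i ≤ j → (s i).1 ≤ (s j).1) ∧
      (∀ i j : Fin K, i ≤ j → (s i).2 ≤ (s j).2) ∧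
      (∀ i, m (s i).1 (s i).2 ≠ 0) ∧
      (∀ i, ((s i).1 : ℕ) < X ∧ ((s i).2 : ℕ) < Y) ∧
      ∑ i, m (s i).1 (s i).2 = Ww hd P X Y := by
  intro n
  induction n with
  | zero =>
    intro X Y hn hX hY
    obtain rfl : X = 0 := by omega
    refine ⟨0, Fin.elim0, fun i => i.elim0, fun i => i.elim0, fun i => i.elim0,
      fun i => i.elim0, fun i => i.elim0, ?_⟩
    simp [Ww_zero_left hd P m hPm hY]
  | succ n ih =>
    intro X Y hn hX hY
    rcases Nat.eq_zero_or_pos X with hX0 | hX0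
    · subst hX0
      exact ⟨0, Fin.elim0, fun i => i.elim0, fun i => i.elim0, fun i => i.elim0,
        fun i => i.elim0, fun i => i.elim0, by simp [Ww_zero_left hd P m hPm hY]⟩
    rcases Nat.eq_zero_or_pos Y with hY0 | hY0
    · subst hY0
      exact ⟨0, Fin.elim0, fun i => i.elim0, fun i => i.elim0, fun i => i.elim0,
        fun i => i.elim0, fun i => i.elim0, by simp [Ww_zero_right hd P m hPm hX]⟩
    obtain ⟨X', rfl⟩ : ∃ X', X = X' + 1 := ⟨X - 1, by omega⟩
    obtain ⟨Y', rfl⟩ : ∃ Y', Y = Y' + 1 := ⟨Y - 1, by omega⟩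
    have hX' : X' < r := by omega
    have hY' : Y' < c := by omega
    have hrec := Wrec hd P m hPm hX' hY'
    -- choose the better of the two sub-rectangles
    rcases le_total (Ww hd P X' (Y'+1)) (Ww hd P (X'+1) Y') with hcmp | hcmp
    · -- use sub-rectangle (X'+1, Y'), cells bounded by (X'+1, Y')
      obtain ⟨K, s, hinjs, hs1, hs2, hsnz, hsbd, hssum⟩ :=
        ih (X'+1) Y' (by omega) (by omega) (by omega)
      rcases Nat.eq_zero_or_pos (m ⟨X', hX'⟩ ⟨Y', hY'⟩) with hm | hm
      · refine ⟨K, s, hinjs, hs1, hs2, hsnz, fun i => ⟨(hsbd i).1, by have := (hsbd i).2; omega⟩, ?_⟩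
        rw [hssum]
        omega
      · refine ⟨K + 1, Fin.snoc s (⟨X', hX'⟩, ⟨Y', hY'⟩), ?_, ?_, ?_, ?_, ?_, ?_⟩
        · intro i j hij
          induction i using Fin.lastCases with
          | last =>
            induction j using Fin.lastCases with
            | last => rfl
            | cast j =>
              exfalso
              rw [Fin.snoc_last, Fin.snoc_castSucc] at hij
              have := (hsbd j).2
              have : ((s j).2 : ℕ) = Y' := by
                have := congrArg (fun p => ((p.2 : Fin c) : ℕ)) hij
                simpa using this.symm
              omega
          | cast i =>
            induction j using Fin.lastCases with
            | last =>
              exfalso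
              rw [Fin.snoc_last, Fin.snoc_castSucc] at hij
              have := (hsbd i).2
              have : ((s i).2 : ℕ) = Y' := by
                have := congrArg (fun p => ((p.2 : Fin c) : ℕ)) hij
                simpa using this
              omega
            | cast j =>
              rw [Fin.snoc_castSucc, Fin.snoc_castSucc] at hij
              exact congrArg Fin.castSucc (hinjs hij)
        · intro i j hij
          induction j using Fin.lastCases with
          | last =>
            rw [Fin.snoc_last]
            induction i using Fin.lastCases with
            | last => rw [Fin.snoc_last]
            | cast i =>
              rw [Fin.snoc_castSucc]
              have hb := (hsbd i).1
              exact Fin.le_def.mpr (by simpa using Nat.lt_succ_iff.mp hb)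
          | cast j =>
            induction i using Fin.lastCases with
            | last =>
              exfalso
              have h1 := hij
              rw [Fin.le_def] at h1
              simp at h1
              omega
            | cast i =>
              rw [Fin.snoc_castSucc, Fin.snoc_castSucc]
              exact hs1 i j (Fin.castSucc_le_castSucc_iff.mp hij)
        · intro i j hij
          induction j using Fin.lastCases with
          | last =>
            rw [Fin.snoc_last]
            induction i using Fin.lastCases with
            | last => rw [Fin.snoc_last]
            | cast i =>
              rw [Fin.snoc_castSucc]
              have hb := (hsbd i).2
              exact le_of_lt (Fin.lt_def.mpr (by simpa using hb))
          | cast j =>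
            induction i using Fin.lastCases with
            | last =>
              exfalso
              have h1 := hij
              rw [Fin.le_def] at h1
              simp at h1
              omega
            | cast i =>
              rw [Fin.snoc_castSucc, Fin.snoc_castSucc]
              exact hs2 i j (Fin.castSucc_le_castSucc_iff.mp hij)
        · intro i
          induction i using Fin.lastCases with
          | last => rw [Fin.snoc_last]; simpa using hm.ne' 
          | cast i => rw [Fin.snoc_castSucc]; exact hsnz i
        · intro i
          induction i using Fin.lastCases with
          | last => rw [Fin.snoc_last]; exact ⟨by simp, by simp⟩
          | cast i =>
            rw [Fin.snoc_castSucc]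
            exact ⟨by have := (hsbd i).1; omega, by have := (hsbd i).2; omega⟩
        · rw [Fin.sum_univ_castSucc]
          simp only [Fin.snoc_castSucc, Fin.snoc_last]
          rw [hssum]
          omega
    · -- use sub-rectangle (X', Y'+1), cells bounded by (X', Y'+1)
      obtain ⟨K, s, hinjs, hs1, hs2, hsnz, hsbd, hssum⟩ :=
        ih X' (Y'+1) (by omega) (by omega) (by omega)
      rcases Nat.eq_zero_or_pos (m ⟨X', hX'⟩ ⟨Y', hY'⟩) with hm | hm
      · refine ⟨K, s, hinjs, hs1, hs2, hsnz, fun i => ⟨by have := (hsbd i).1; omega, (hsbd i).2⟩, ?_⟩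
        rw [hssum]
        omega
      · refine ⟨K + 1, Fin.snoc s (⟨X', hX'⟩, ⟨Y', hY'⟩), ?_, ?_, ?_, ?_, ?_, ?_⟩
        · intro i j hij
          induction i using Fin.lastCases with
          | last =>
            induction j using Fin.lastCases with
            | last => rfl
            | cast j =>
              exfalso
              rw [Fin.snoc_last, Fin.snoc_castSucc] at hij
              have := (hsbd j).1
              have : ((s j).1 : ℕ) = X' := by
                have := congrArg (fun p => ((p.1 : Fin r) : ℕ)) hij
                simpa using this.symm
              omega
          | cast i =>
            induction j using Fin.lastCases with
            | last =>
              exfalso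
              rw [Fin.snoc_last, Fin.snoc_castSucc] at hij
              have := (hsbd i).1
              have : ((s i).1 : ℕ) = X' := by
                have := congrArg (fun p => ((p.1 : Fin r) : ℕ)) hij
                simpa using this
              omega
            | cast j =>
              rw [Fin.snoc_castSucc, Fin.snoc_castSucc] at hij
              exact congrArg Fin.castSucc (hinjs hij)
        · intro i j hij
          induction j using Fin.lastCases with
          | last =>
            rw [Fin.snoc_last]
            induction i using Fin.lastCases with
            | last => rw [Fin.snoc_last]
            | cast i =>
              rw [Fin.snoc_castSucc]
              have hb := (hsbd i).1
              exact le_of_lt (Fin.lt_def.mpr (by simpa using hb))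
          | cast j =>
            induction i using Fin.lastCases with
            | last =>
              exfalso
              have h1 := hij
              rw [Fin.le_def] at h1
              simp at h1
              omega
            | cast i =>
              rw [Fin.snoc_castSucc, Fin.snoc_castSucc]
              exact hs1 i j (Fin.castSucc_le_castSucc_iff.mp hij)
        · intro i j hij
          induction j using Fin.lastCases with
          | last =>
            rw [Fin.snoc_last]
            induction i using Fin.lastCases with
            | last => rw [Fin.snoc_last]
            | cast i =>
              rw [Fin.snoc_castSucc]
              have hb := (hsbd i).2
              exact Fin.le_def.mpr (by simpa using Nat.lt_succ_iff.mp hb)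
          | cast j =>
            induction i using Fin.lastCases with
            | last =>
              exfalso
              have h1 := hij
              rw [Fin.le_def] at h1
              simp at h1
              omega
            | cast i =>
              rw [Fin.snoc_castSucc, Fin.snoc_castSucc]
              exact hs2 i j (Fin.castSucc_le_castSucc_iff.mp hij)
        · intro i
          induction i using Fin.lastCases with
          | last => rw [Fin.snoc_last]; simpa using hm.ne'
          | cast i => rw [Fin.snoc_castSucc]; exact hsnz i
        · intro i
          induction i using Fin.lastCases with
          | last => rw [Fin.snoc_last]; exact ⟨by simp, by simp⟩
          | cast i =>
            rw [Fin.snoc_castSucc]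
            exact ⟨by have := (hsbd i).1; omega, by have := (hsbd i).2; omega⟩
        · rw [Fin.sum_univ_castSucc]
          simp only [Fin.snoc_castSucc, Fin.snoc_last]
          rw [hssum]
          omega


lemma boundary_eq (hr : 0 < r) (hc : 0 < c)
    (lam : Fin (r + c + 1) → Fin d → ℕ)
    (hlam : ∀ i : Fin (r + c + 1),
      lam i = if h : (i : ℕ) ≤ c then P (Fin.last r) ⟨(i : ℕ), Nat.lt_succ_of_le h⟩
              else P ⟨r - ((i : ℕ) - c), Nat.lt_succ_of_le (Nat.sub_le _ _)⟩ (Fin.last c)) :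
    (Finset.univ.sup fun i : Fin (r + c) =>
        max (lam i.succ ⟨0, hd⟩ - lam i.castSucc ⟨d - 1, Nat.sub_lt hd Nat.one_pos⟩)
            (lam i.castSucc ⟨0, hd⟩ - lam i.succ ⟨d - 1, Nat.sub_lt hd Nat.one_pos⟩))
      = Ww hd P r c := by
  have Pcongr : ∀ (a a' : Fin (r+1)) (b b' : Fin (c+1)), (a : ℕ) = (a' : ℕ) →
      (b : ℕ) = (b' : ℕ) → P a b = P a' b' := by
    intro a a' b b' h h'
    have ha : a = a' := Fin.ext h
    have hb : b = b' := Fin.ext h'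
    rw [ha, hb]
  have lam_val : ∀ j : Fin (r + c + 1),
      lam j = if (j : ℕ) ≤ c then pt P r (j : ℕ) else pt P (r - ((j : ℕ) - c)) c := by
    intro j
    rw [hlam j]
    split_ifs with h
    · rw [pt_eq P le_rfl h]
      exact Pcongr _ _ _ _ rfl rfl
    · rw [pt_eq P (by omega) le_rfl]
      exact Pcongr _ _ _ _ rfl rfl
  have key : ∀ i : Fin (r + c),
      max (lam i.succ ⟨0, hd⟩ - lam i.castSucc ⟨d - 1, Nat.sub_lt hd Nat.one_pos⟩)
          (lam i.castSucc ⟨0, hd⟩ - lam i.succ ⟨d - 1, Nat.sub_lt hd Nat.one_pos⟩)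
        = if (i : ℕ) < c then ve hd P r (i : ℕ) else he hd P (r - 1 - ((i : ℕ) - c)) c := by
    intro i
    have hsv : (i.succ : ℕ) = (i : ℕ) + 1 := rfl
    have hcv : (i.castSucc : ℕ) = (i : ℕ) := rfl
    rcases Nat.lt_or_ge (i : ℕ) c with hic | hic
    · rw [if_pos hic, lam_val i.succ, lam_val i.castSucc,
        if_pos (show (i.succ : ℕ) ≤ c by omega), if_pos (show (i.castSucc : ℕ) ≤ c by omega),
        hsv, hcv]
      have h1 : pt P r (i : ℕ) ⟨0, hd⟩ ≤ pt P r ((i : ℕ)+1) ⟨0, hd⟩ :=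
        (col_inter P m hPm le_rfl hic).1 ⟨0, hd⟩
      have h2 : pt P r (i : ℕ) ⟨d - 1, Nat.sub_lt hd Nat.one_pos⟩
          ≤ pt P r ((i : ℕ)+1) ⟨d - 1, Nat.sub_lt hd Nat.one_pos⟩ :=
        (col_inter P m hPm le_rfl hic).1 _
      have h3 : pt P r (i : ℕ) ⟨d - 1, Nat.sub_lt hd Nat.one_pos⟩ ≤ pt P r (i : ℕ) ⟨0, hd⟩ :=
        pt_anti P m hPm (hd := hd) r (i : ℕ)
      show _ = pt P r ((i : ℕ)+1) ⟨0, hd⟩ - pt P r (i : ℕ) ⟨d - 1, Nat.sub_lt hd Nat.one_pos⟩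
      omega
    · rw [if_neg (by omega), lam_val i.succ, lam_val i.castSucc,
        if_neg (show ¬ (i.succ : ℕ) ≤ c by omega), hsv, hcv]
      have hub : (i : ℕ) < r + c := i.isLt
      set x : ℕ := r - 1 - ((i : ℕ) - c) with hxdef
      have hx1 : r - (((i : ℕ) + 1) - c) = x := by omega
      have hx2 : (i : ℕ) ≤ c → r = x + 1 := by omega
      have hx3 : ¬ (i : ℕ) ≤ c → r - ((i : ℕ) - c) = x + 1 := by omega
      have hxr : x < r := by omega
      have h1 : pt P x c ⟨0, hd⟩ ≤ pt P (x+1) c ⟨0, hd⟩ :=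
        (row_inter P m hPm hxr le_rfl).1 ⟨0, hd⟩
      have h2 : pt P x c ⟨d - 1, Nat.sub_lt hd Nat.one_pos⟩
          ≤ pt P (x+1) c ⟨d - 1, Nat.sub_lt hd Nat.one_pos⟩ :=
        (row_inter P m hPm hxr le_rfl).1 _
      have h3 : pt P x c ⟨d - 1, Nat.sub_lt hd Nat.one_pos⟩ ≤ pt P x c ⟨0, hd⟩ :=
        pt_anti P m hPm (hd := hd) x c
      rw [hx1]
      split_ifs with h
      · have hic2 : (i : ℕ) = c := by omega
        have e1 : pt P r c = pt P (x+1) c := by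
          rw [pt_eq P le_rfl le_rfl, pt_eq P (by omega : x + 1 ≤ r) le_rfl]
          exact Pcongr _ _ _ _ (by show r = x + 1; omega) rfl
        rw [hic2, e1]
        show _ = pt P (x+1) c ⟨0, hd⟩ - pt P x c ⟨d - 1, Nat.sub_lt hd Nat.one_pos⟩
        omega
      · rw [hx3 h]
        show _ = pt P (x+1) c ⟨0, hd⟩ - pt P x c ⟨d - 1, Nat.sub_lt hd Nat.one_pos⟩
        omega
  rw [Finset.sup_congr rfl (fun i _ => key i)]
  apply le_antisymm
  · refine Finset.sup_le fun i _ => ?_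
    split_ifs with h
    · exact le_trans (Finset.le_sup (Finset.mem_range.mpr h)) (le_max_left _ _)
    · refine le_trans (Finset.le_sup (f := fun i => he hd P i c)
        (Finset.mem_range.mpr (show r - 1 - ((i : ℕ) - c) < r by omega))) (le_max_right _ _)
  · refine max_le (Finset.sup_le fun j hj => ?_) (Finset.sup_le fun j hj => ?_)
    · rw [Finset.mem_range] at hj
      refine le_trans ?_ (Finset.le_sup (Finset.mem_univ (⟨j, by omega⟩ : Fin (r + c))))
      show ve hd P r j ≤ if j < c then ve hd P r j else he hd P (r - 1 - (j - c)) c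
      rw [if_pos hj]
    · rw [Finset.mem_range] at hj
      refine le_trans ?_ (Finset.le_sup (Finset.mem_univ
        (⟨c + (r - 1 - j), by omega⟩ : Fin (r + c))))
      show he hd P j c ≤ if c + (r - 1 - j) < c then ve hd P r (c + (r - 1 - j))
        else he hd P (r - 1 - ((c + (r - 1 - j)) - c)) c
      rw [if_neg (by omega), show r - 1 - ((c + (r - 1 - j)) - c) = j by omega]

end
end DRSK

/-- In a `d`-RSK growth diagram on the `r×c` rectangle, the maximal length (sum of
entries) of an NE-chain of the filling equals the maximum of
`MCW_d(λ⁽ⁱ⁻¹⁾, λ⁽ⁱ⁾)` over the sequence `λ⁽⁰⁾,…,λ⁽ʳ⁺ᶜ⁾` of partitions along the outer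
boundary, where for interlacing partitions `MCW_d(α,β) = MCW_d(β,α) = β₁ - α_d`
(for `α ≺ β`), expressed here as `max(β₁ ∸ α_d, α₁ ∸ β_d)` in truncated subtraction. -/
theorem dRSK_growth_NE_chain_eq_MCW (d r c : ℕ) (hd : 0 < d) (hr : 0 < r) (hc : 0 < c)
    (P : Fin (r + 1) → Fin (c + 1) → Fin d → ℕ) (m : Fin r → Fin c → ℕ)
    (hPm : IsDRSKGrowth d r c P m)
    (lam : Fin (r + c + 1) → Fin d → ℕ)
    (hlam : ∀ i : Fin (r + c + 1),
      lam i = if h : (i : ℕ) ≤ c then P (Fin.last r) ⟨(i : ℕ), by omega⟩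
              else P ⟨r - ((i : ℕ) - c), by omega⟩ (Fin.last c)) :
    sSup {ℓ : ℕ | ∃ (K : ℕ) (s : Fin K → Fin r × Fin c), Function.Injective s ∧
        (∀ i j : Fin K, i ≤ j → (s i).1 ≤ (s j).1) ∧
        (∀ i j : Fin K, i ≤ j → (s i).2 ≤ (s j).2) ∧
        (∀ i, m (s i).1 (s i).2 ≠ 0) ∧
        ∑ i, m (s i).1 (s i).2 = ℓ} =
      Finset.univ.sup fun i : Fin (r + c) =>
        max (lam i.succ ⟨0, hd⟩ - lam i.castSucc ⟨d - 1, Nat.sub_lt hd Nat.one_pos⟩)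
            (lam i.castSucc ⟨0, hd⟩ - lam i.succ ⟨d - 1, Nat.sub_lt hd Nat.one_pos⟩) := by
  rw [DRSK.boundary_eq hd P m hPm hr hc lam hlam]
  apply IsGreatest.csSup_eq
  constructor
  · obtain ⟨K, s, h1, h2, h3, h4, _, h6⟩ :=
      DRSK.chain_exists hd P m hPm (r + c) r c le_rfl le_rfl le_rfl
    exact ⟨K, s, h1, h2, h3, h4, h6⟩
  · rintro ℓ ⟨K, s, hinj, h1, h2, hnz, hsum⟩
    exact hsum ▸ DRSK.chain_le hd P m hPm K r c le_rfl le_rfl s hinj h1 h2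
      (fun i => ⟨(s i).1.isLt, (s i).2.isLt⟩)
end

section
/- Let d and L be positive integers and set M = d + L. For any distinct integers t_1, …, t_d in {1, …, M}, we have |Σ_{l=1}^{d} e^{2πi t_l/M}| ≤ sin(πd/M)/sin(π/M), and equality holds if and only if the residues t_1, …, t_d modulo M form a set of d consecutive residues modulo M (i.e., there is an integer s with {t_1,…,t_d} ≡ {s+1, s+2, …, s+d} (mod M)). -/
open Complex Finset


noncomputable def cE (M : ℕ) (n : ℤ) : ℂ :=
  Complex.exp (2 * (Real.pi : ℂ) * Complex.I * (n : ℂ) / (M : ℂ))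

lemma cE_eq (M : ℕ) (n : ℤ) :
    cE M n = Complex.exp (((2 * Real.pi * n / M : ℝ) : ℂ) * Complex.I) := by
  unfold cE; congr 1; push_cast; ring

lemma abs_cE (M : ℕ) (n : ℤ) : ‖cE M n‖ = 1 := by
  rw [cE_eq M n, Complex.norm_exp_ofReal_mul_I]

lemma cE_congr (M : ℕ) (hM : 0 < M) {a b : ℤ} (h : a ≡ b [ZMOD (M : ℤ)]) :
    cE M a = cE M b := by
  obtain ⟨k, hk⟩ := Int.ModEq.dvd h
  have hb : (b : ℂ) = (a : ℂ) + (M : ℂ) * (k : ℂ) := by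
    have : b = a + M * k := by linarith
    rw [this]; push_cast; ring
  have hM0 : (M : ℂ) ≠ 0 := by exact_mod_cast Nat.cast_ne_zero.mpr hM.ne'
  unfold cE
  rw [hb]
  rw [show 2 * (Real.pi : ℂ) * Complex.I * ((a : ℂ) + (M : ℂ) * (k : ℂ)) / (M : ℂ)
      = 2 * (Real.pi : ℂ) * Complex.I * (a : ℂ) / (M : ℂ) + (k : ℂ) * (2 * (Real.pi : ℂ) * Complex.I) by
    field_simp]
  rw [Complex.exp_add, Complex.exp_int_mul_two_pi_mul_I, mul_one]

lemma re_cE (M : ℕ) (β : ℝ) (n : ℤ) :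
    (Complex.exp ((-β : ℝ) * Complex.I) * cE M n).re = Real.cos (2 * Real.pi * n / M - β) := by
  rw [cE_eq M n, ← Complex.exp_add, ← add_mul,
    show ((-β : ℝ) : ℂ) + ((2 * Real.pi * n / M : ℝ) : ℂ) = ((2 * Real.pi * n / M - β : ℝ) : ℂ) by
      push_cast; ring]
  rw [Complex.exp_ofReal_mul_I_re]

lemma abs_exp_mul_I_sub_one (ψ : ℝ) :
    ‖Complex.exp ((ψ : ℂ) * Complex.I) - 1‖ = 2 * |Real.sin (ψ / 2)| := by
  have hc : Real.cos ψ = 1 - 2 * Real.sin (ψ/2) ^ 2 := by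
    have h1 := Real.cos_two_mul' (ψ/2)
    rw [show 2*(ψ/2) = ψ by ring] at h1
    nlinarith [Real.sin_sq_add_cos_sq (ψ/2)]
  have hs : Real.sin ψ = 2 * Real.sin (ψ/2) * Real.cos (ψ/2) := by
    have := Real.sin_two_mul (ψ/2)
    rw [show 2*(ψ/2) = ψ by ring] at this
    linarith
  have key : Complex.exp ((ψ : ℂ) * Complex.I) - 1
      = Complex.exp (((ψ/2 : ℝ) : ℂ) * Complex.I) * (2 * (Real.sin (ψ/2) : ℂ) * Complex.I) := by
    rw [Complex.exp_mul_I, Complex.exp_mul_I,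
      ← Complex.ofReal_cos, ← Complex.ofReal_sin, ← Complex.ofReal_cos, ← Complex.ofReal_sin]
    rw [Complex.ext_iff]
    constructor <;>
      simp only [Complex.add_re, Complex.add_im, Complex.sub_re, Complex.sub_im, Complex.mul_re,
        Complex.mul_im, Complex.one_re, Complex.one_im, Complex.I_re, Complex.I_im,
        Complex.ofReal_re, Complex.ofReal_im, Complex.re_ofNat, Complex.im_ofNat] <;>
      nlinarith [hc, hs]
  rw [key, norm_mul, Complex.norm_exp_ofReal_mul_I, one_mul]
  rw [show (2 : ℂ) * (Real.sin (ψ/2) : ℂ) * Complex.I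
      = ((2 * Real.sin (ψ/2) : ℝ) : ℂ) * Complex.I by push_cast; ring]
  rw [norm_mul, Complex.norm_I, mul_one, Complex.norm_real, Real.norm_eq_abs, abs_mul]
  norm_num

lemma sin_pos_dM (d L : ℕ) (hd : 0 < d) (hL : 0 < L) :
    0 < Real.sin (Real.pi * d / (d + L)) := by
  have h0 : (0:ℝ) < (d:ℝ) := by exact_mod_cast hd
  have hL' : (0:ℝ) < (L:ℝ) := by exact_mod_cast hL
  apply Real.sin_pos_of_pos_of_lt_pi
  · positivity
  · rw [div_lt_iff₀ (by positivity)]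
    have : (d:ℝ) < (d:ℝ) + (L:ℝ) := by linarith
    calc Real.pi * d < Real.pi * ((d:ℝ)+(L:ℝ)) := by
          exact mul_lt_mul_of_pos_left this Real.pi_pos
      _ = Real.pi * ((d:ℝ)+(L:ℝ)) := rfl

lemma sin_pos_1M (d L : ℕ) (hd : 0 < d) (hL : 0 < L) :
    0 < Real.sin (Real.pi / (d + L)) := by
  have h0 : (1:ℝ) ≤ (d:ℝ) := by exact_mod_cast hd
  have hL' : (1:ℝ) ≤ (L:ℝ) := by exact_mod_cast hL
  apply Real.sin_pos_of_pos_of_lt_pi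
  · positivity
  · rw [div_lt_iff₀ (by positivity)]
    rw [lt_mul_iff_one_lt_right Real.pi_pos]
    linarith

lemma abs_cE_interval (d L : ℕ) (hd : 0 < d) (hL : 0 < L) (s : ℤ) :
    ‖∑ j : Fin d, cE (d+L) (s+1+(j:ℕ))‖
      = Real.sin (Real.pi*d/(d+L)) / Real.sin (Real.pi/(d+L)) := by
  have hM : 0 < d + L := by omega
  have hMr : (0:ℝ) < ((d+L:ℕ):ℝ) := by exact_mod_cast hM
  have hMc : ((d+L:ℕ):ℂ) ≠ 0 := by exact_mod_cast hMr.ne'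
  set ω : ℂ := cE (d+L) 1 with hω
  have hterm : ∀ j : Fin d, cE (d+L) (s+1+(j:ℕ)) = cE (d+L) (s+1) * ω ^ (j:ℕ) := by
    intro j
    rw [hω]
    unfold cE
    rw [← Complex.exp_nat_mul, ← Complex.exp_add]
    congr 1
    push_cast
    field_simp
  rw [Finset.sum_congr rfl (fun j _ => hterm j), ← Finset.mul_sum, norm_mul, abs_cE, one_mul]
  rw [Fin.sum_univ_eq_sum_range (fun i => ω ^ i) d]
  have hω1 : ω ≠ 1 := by
    intro h
    rw [hω] at h
    unfold cE at h
    rw [Complex.exp_eq_one_iff] at h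
    obtain ⟨n, hn⟩ := h
    have h2 : (2 * (Real.pi:ℂ) * Complex.I) ≠ 0 := by
      simp [Complex.I_ne_zero, Complex.ofReal_ne_zero, Real.pi_ne_zero]
    have hMc' : ((d:ℂ)+(L:ℂ)) ≠ 0 := by push_cast at hMc; exact hMc
    field_simp [hMc'] at hn
    have h3 : (2*(Real.pi:ℂ)*Complex.I) * ((n:ℂ)*((d+L:ℕ):ℂ)) = (2*(Real.pi:ℂ)*Complex.I) * 1 := by
      rw [mul_one]; push_cast at hn ⊢; linear_combination (-(2*(Real.pi:ℂ)*Complex.I)) * hn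
    have h4 : (n:ℂ)*((d+L:ℕ):ℂ) = 1 := mul_left_cancel₀ h2 h3
    have h5 : n * ((d+L:ℕ):ℤ) = 1 := by exact_mod_cast h4
    have h6 : ((d+L:ℕ):ℤ) ∣ 1 := ⟨n, by linarith⟩
    have h7 := Int.le_of_dvd one_pos h6
    omega
  rw [geom_sum_eq hω1, norm_div]
  have hωd : ω ^ d = Complex.exp ((((2*Real.pi*d/((d+L:ℕ):ℝ) : ℝ)) : ℂ) * Complex.I) := by
    rw [hω, cE_eq, ← Complex.exp_nat_mul]
    congr 1
    push_cast
    ring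
  have hω1' : ω = Complex.exp ((((2*Real.pi*1/((d+L:ℕ):ℝ) : ℝ)) : ℂ) * Complex.I) := by
    rw [hω, cE_eq]
    norm_num
  rw [hωd, hω1', abs_exp_mul_I_sub_one, abs_exp_mul_I_sub_one]
  have e1 : 2*Real.pi*d/((d+L:ℕ):ℝ)/2 = Real.pi*d/((d:ℝ)+(L:ℝ)) := by push_cast; ring
  have e2 : 2*Real.pi*1/((d+L:ℕ):ℝ)/2 = Real.pi/((d:ℝ)+(L:ℝ)) := by push_cast; ring
  rw [e1, e2, abs_of_pos (sin_pos_dM d L hd hL), abs_of_pos (sin_pos_1M d L hd hL)]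
  rw [mul_div_mul_left _ _ (by norm_num : (2:ℝ) ≠ 0)]

section CosSep
variable {dd Mr : ℝ}

lemma angle_le_pi (hdd : 0 < dd) (hM : dd + 1 ≤ Mr) : Real.pi * dd / Mr ≤ Real.pi := by
  have hM0 : (0:ℝ) < Mr := by linarith
  rw [div_le_iff₀ hM0]
  nlinarith [Real.pi_pos]

lemma cos_sep_in (hdd : 0 < dd) (hM : dd + 1 ≤ Mr) {r : ℝ} (hr : |r| ≤ dd/2) :
    Real.cos (Real.pi * dd / Mr) ≤ Real.cos (2 * Real.pi * r / Mr) := by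
  have hM0 : (0:ℝ) < Mr := by linarith
  have hpd : (0:ℝ) ≤ Real.pi * dd := mul_nonneg Real.pi_pos.le hdd.le
  have habs : |2 * Real.pi * r / Mr| = 2 * Real.pi * |r| / Mr := by
    rw [abs_div, abs_of_pos hM0, abs_mul, abs_of_pos (by positivity : (0:ℝ) < 2*Real.pi)]
  rw [← Real.cos_abs (2 * Real.pi * r / Mr), habs]
  apply Real.cos_le_cos_of_nonneg_of_le_pi (by positivity) (angle_le_pi hdd hM)
  rw [div_le_div_iff₀ hM0 hM0]
  nlinarith [mul_le_mul_of_nonneg_right hr (by positivity : (0:ℝ) ≤ 2*Real.pi*Mr)]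

lemma cos_sep_in_eq (hdd : 0 < dd) (hM : dd + 1 ≤ Mr) {r : ℝ} (hr : |r| ≤ dd/2)
    (heq : Real.cos (2 * Real.pi * r / Mr) = Real.cos (Real.pi * dd / Mr)) : |r| = dd/2 := by
  have hM0 : (0:ℝ) < Mr := by linarith
  have hpd : (0:ℝ) ≤ Real.pi * dd := mul_nonneg Real.pi_pos.le hdd.le
  have habs : |2 * Real.pi * r / Mr| = 2 * Real.pi * |r| / Mr := by
    rw [abs_div, abs_of_pos hM0, abs_mul, abs_of_pos (by positivity : (0:ℝ) < 2*Real.pi)]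
  have h1 : Real.cos (2 * Real.pi * |r| / Mr) = Real.cos (Real.pi * dd / Mr) := by
    rw [← habs, Real.cos_abs]; exact heq
  have h2 : 2 * Real.pi * |r| / Mr = Real.pi * dd / Mr := by
    apply Real.injOn_cos ⟨by positivity, ?_⟩
      ⟨div_nonneg hpd hM0.le, angle_le_pi hdd hM⟩ h1
    calc 2 * Real.pi * |r| / Mr ≤ Real.pi * dd / Mr := by
          rw [div_le_div_iff₀ hM0 hM0]
          nlinarith [mul_le_mul_of_nonneg_right hr (by positivity : (0:ℝ) ≤ 2*Real.pi*Mr)]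
      _ ≤ Real.pi := angle_le_pi hdd hM
  have h3 : 2 * Real.pi * |r| = Real.pi * dd := by
    field_simp at h2; rw [← h2]; ring
  nlinarith [Real.pi_pos]

lemma cos_sep_out (hdd : 0 < dd) (hM : dd + 1 ≤ Mr) {r : ℝ} (hr1 : dd/2 ≤ r)
    (hr2 : r ≤ Mr - dd/2) :
    Real.cos (2 * Real.pi * r / Mr) ≤ Real.cos (Real.pi * dd / Mr) := by
  have hM0 : (0:ℝ) < Mr := by linarith
  have hpd : (0:ℝ) ≤ Real.pi * dd := mul_nonneg Real.pi_pos.le hdd.le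
  by_cases hc : 2 * Real.pi * r / Mr ≤ Real.pi
  · apply Real.cos_le_cos_of_nonneg_of_le_pi (div_nonneg hpd hM0.le) hc
    rw [div_le_div_iff₀ hM0 hM0]
    nlinarith [mul_le_mul_of_nonneg_right hr1 (by positivity : (0:ℝ) ≤ 2*Real.pi*Mr)]
  · push_neg at hc
    rw [← Real.cos_two_pi_sub]
    apply Real.cos_le_cos_of_nonneg_of_le_pi (div_nonneg hpd hM0.le) (by linarith)
    have h4 : (Real.pi*dd + 2*Real.pi*r)/Mr ≤ 2*Real.pi := by
      rw [div_le_iff₀ hM0]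
      nlinarith [mul_le_mul_of_nonneg_right hr2 (by positivity : (0:ℝ) ≤ 2*Real.pi)]
    rw [add_div] at h4
    linarith

lemma cos_sep_out_eq (hdd : 0 < dd) (hM : dd + 1 ≤ Mr) {r : ℝ} (hr1 : dd/2 ≤ r)
    (hr2 : r ≤ Mr - dd/2)
    (heq : Real.cos (2 * Real.pi * r / Mr) = Real.cos (Real.pi * dd / Mr)) :
    r = dd/2 ∨ r = Mr - dd/2 := by
  have hM0 : (0:ℝ) < Mr := by linarith
  have hpd : (0:ℝ) ≤ Real.pi * dd := mul_nonneg Real.pi_pos.le hdd.le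
  have hr0 : (0:ℝ) ≤ 2 * Real.pi * r := by nlinarith [Real.pi_pos]
  by_cases hc : 2 * Real.pi * r / Mr ≤ Real.pi
  · left
    have h2 : 2 * Real.pi * r / Mr = Real.pi * dd / Mr := by
      exact Real.injOn_cos ⟨div_nonneg hr0 hM0.le, hc⟩
        ⟨div_nonneg hpd hM0.le, angle_le_pi hdd hM⟩ heq
    have h3 : 2 * Real.pi * r = Real.pi * dd := by field_simp at h2; rw [← h2]; ring
    nlinarith [Real.pi_pos]
  · right
    push_neg at hc
    have h1 : Real.cos (2*Real.pi - 2 * Real.pi * r / Mr) = Real.cos (Real.pi * dd / Mr) := by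
      rw [Real.cos_two_pi_sub]; exact heq
    have h2 : 2*Real.pi - 2 * Real.pi * r / Mr = Real.pi * dd / Mr := by
      apply Real.injOn_cos ⟨?_, by linarith⟩
        ⟨div_nonneg hpd hM0.le, angle_le_pi hdd hM⟩ h1
      have h5 : 2 * Real.pi * r / Mr ≤ 2 * Real.pi := by
        rw [div_le_iff₀ hM0]
        nlinarith [mul_le_mul_of_nonneg_right hr2 (by positivity : (0:ℝ) ≤ 2*Real.pi), Real.pi_pos]
      linarith
    have h3 : 2*Real.pi*Mr - 2 * Real.pi * r = Real.pi * dd := by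
      field_simp at h2; rw [← h2]; ring
    nlinarith [Real.pi_pos]

end CosSep

lemma modeq_eq_of_abs_lt {n a b : ℤ} (h : a ≡ b [ZMOD n]) (hlt : |a - b| < n) : a = b := by
  by_contra hne
  have hd : n ∣ (a - b) := dvd_neg.mp (neg_sub a b ▸ Int.ModEq.dvd h)
  have h2 : n ∣ |a - b| := (dvd_abs n (a-b)).mpr hd
  have h3 := Int.le_of_dvd (abs_pos.mpr (sub_ne_zero.mpr hne)) h2
  linarith

lemma exists_perm_comp {d : ℕ} (f g : Fin d → ℤ) (hf : Function.Injective f)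
    (hg : Function.Injective g)
    (h : Finset.image f Finset.univ = Finset.image g Finset.univ) :
    ∃ σ : Equiv.Perm (Fin d), ∀ l, f (σ l) = g l := by
  have hrange : ∀ l, g l ∈ Set.range f := by
    intro l
    have : g l ∈ Finset.image f Finset.univ := by
      rw [h]; exact Finset.mem_image_of_mem g (Finset.mem_univ l)
    obtain ⟨j, _, hj⟩ := Finset.mem_image.mp this
    exact ⟨j, hj⟩
  set σ0 : Fin d → Fin d := fun l => (Equiv.ofInjective f hf).symm ⟨g l, hrange l⟩ with hσ0
  have hfσ0 : ∀ l, f (σ0 l) = g l := by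
    intro l
    have := (Equiv.ofInjective f hf).apply_symm_apply ⟨g l, hrange l⟩
    rw [hσ0]
    simp only []
    have h2 := congrArg Subtype.val this
    rwa [Equiv.ofInjective_apply] at h2
  have hinj : Function.Injective σ0 := by
    intro i j hij
    apply hg
    rw [← hfσ0 i, ← hfσ0 j, hij]
  have hbij : Function.Bijective σ0 := (Finite.injective_iff_bijective).mp hinj
  exact ⟨Equiv.ofBijective σ0 hbij, fun l => hfσ0 l⟩

lemma sum_sep {S T : Finset ℤ} (c : ℤ → ℝ) (lam : ℝ) (hcard : S.card = T.card)
    (hT : ∀ x ∈ T, lam ≤ c x) (hS : ∀ y ∈ S, y ∉ T → c y ≤ lam) :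
    (∑ x ∈ S, c x ≤ ∑ x ∈ T, c x) ∧
    (∑ x ∈ S, c x = ∑ x ∈ T, c x →
      (∀ y ∈ S, y ∉ T → c y = lam) ∧ (∀ x ∈ T, x ∉ S → c x = lam)) := by
  have hk : (S \ T).card = (T \ S).card := by
    have h1 := Finset.card_sdiff_add_card_inter S T
    have h2 := Finset.card_sdiff_add_card_inter T S
    rw [Finset.inter_comm] at h2
    omega
  have hsplitS := Finset.sum_inter_add_sum_sdiff S T c
  have hsplitT := Finset.sum_inter_add_sum_sdiff T S c
  have hic : ∑ x ∈ S ∩ T, c x = ∑ x ∈ T ∩ S, c x := by rw [Finset.inter_comm]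
  have hup : ∑ y ∈ S \ T, c y ≤ (S \ T).card • lam := by
    apply Finset.sum_le_card_nsmul
    intro y hy
    rw [Finset.mem_sdiff] at hy
    exact hS y hy.1 hy.2
  have hlow : (T \ S).card • lam ≤ ∑ x ∈ T \ S, c x := by
    apply Finset.card_nsmul_le_sum
    intro x hx
    exact hT x (Finset.mem_sdiff.mp hx).1
  constructor
  · rw [hk] at hup
    linarith [hup, hlow, hsplitS, hsplitT, hic]
  · intro heq
    rw [hk] at hup
    have hdiffeq : ∑ y ∈ S \ T, c y = (T \ S).card • lam ∧
        ∑ x ∈ T \ S, c x = (T \ S).card • lam := by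
      constructor <;> linarith [hup, hlow, hsplitS, hsplitT, hic]
    constructor
    · intro y hyS hyT
      by_contra hne
      have hylt : c y < lam := lt_of_le_of_ne (hS y hyS hyT) hne
      have hmem : y ∈ S \ T := Finset.mem_sdiff.mpr ⟨hyS, hyT⟩
      have : ∑ y ∈ S \ T, c y < ∑ _y ∈ S \ T, lam := by
        apply Finset.sum_lt_sum
        · intro i hi
          rw [Finset.mem_sdiff] at hi
          exact hS i hi.1 hi.2
        · exact ⟨y, hmem, hylt⟩
      rw [Finset.sum_const, hk] at this
      linarith [hdiffeq.1]
    · intro x hxT hxS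
      by_contra hne
      have hxgt : lam < c x := lt_of_le_of_ne (hT x hxT) (Ne.symm hne)
      have hmem : x ∈ T \ S := Finset.mem_sdiff.mpr ⟨hxT, hxS⟩
      have : ∑ _x ∈ T \ S, lam < ∑ x ∈ T \ S, c x := by
        apply Finset.sum_lt_sum
        · intro i hi
          exact hT i (Finset.mem_sdiff.mp hi).1
        · exact ⟨x, hmem, hxgt⟩
      rw [Finset.sum_const] at this
      linarith [hdiffeq.2]

lemma exp_neg_arg_mul (z : ℂ) :
    Complex.exp (((-(z.arg) : ℝ) : ℂ) * Complex.I) * z = ((‖z‖ : ℝ) : ℂ) := by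
  have h : ∀ (r θ : ℝ), Complex.exp (((-θ : ℝ) : ℂ) * Complex.I)
      * ((r:ℂ) * Complex.exp (((θ:ℝ):ℂ) * Complex.I)) = (r:ℂ) := by
    intro r θ
    rw [show Complex.exp (((-θ : ℝ) : ℂ) * Complex.I) * ((r:ℂ) * Complex.exp (((θ:ℝ):ℂ) * Complex.I))
        = (r:ℂ) * (Complex.exp (((-θ : ℝ) : ℂ) * Complex.I) * Complex.exp (((θ:ℝ):ℂ) * Complex.I)) by ring,
      ← Complex.exp_add, show (((-θ : ℝ) : ℂ) * Complex.I + ((θ:ℝ):ℂ) * Complex.I) = 0 by push_cast; ring,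
      Complex.exp_zero, mul_one]
  calc Complex.exp (((-(z.arg) : ℝ) : ℂ) * Complex.I) * z
      = Complex.exp (((-(z.arg) : ℝ) : ℂ) * Complex.I)
        * (((‖z‖ : ℝ) : ℂ) * Complex.exp (((z.arg : ℝ) : ℂ) * Complex.I)) := by
        rw [Complex.norm_mul_exp_arg_mul_I z]
    _ = ((‖z‖ : ℝ) : ℂ) := h _ _

/-- Let `M = d + L`. For distinct integers `t₁,…,t_d ∈ {1,…,M}`, the absolute value of
`Σ_l e^{2πi t_l/M}` is at most `sin(πd/M)/sin(π/M)`, with equality if and only if the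
residues `t₁,…,t_d` form a set of `d` consecutive residues modulo `M`. -/
theorem exp_sum_le_sin_ratio (d L : ℕ) (hd : 0 < d) (hL : 0 < L)
    (t : Fin d → ℤ) (ht : Function.Injective t)
    (hrange : ∀ l, 1 ≤ t l ∧ t l ≤ ((d + L : ℕ) : ℤ)) :
    ‖∑ l : Fin d,
        Complex.exp (2 * (Real.pi : ℂ) * Complex.I * (t l : ℂ) / ((d + L : ℕ) : ℂ))‖
      ≤ Real.sin (Real.pi * d / (d + L)) / Real.sin (Real.pi / (d + L)) ∧
    (‖∑ l : Fin d,
        Complex.exp (2 * (Real.pi : ℂ) * Complex.I * (t l : ℂ) / ((d + L : ℕ) : ℂ))‖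
        = Real.sin (Real.pi * d / (d + L)) / Real.sin (Real.pi / (d + L)) ↔
      ∃ (s : ℤ) (σ : Equiv.Perm (Fin d)), ∀ l : Fin d,
        t (σ l) ≡ s + 1 + ((l : ℕ) : ℤ) [ZMOD ((d + L : ℕ) : ℤ)]) := by
  have hgoal : (∑ l : Fin d,
      Complex.exp (2 * (Real.pi : ℂ) * Complex.I * (t l : ℂ) / ((d + L : ℕ) : ℂ)))
      = ∑ l : Fin d, cE (d+L) (t l) := rfl
  rw [hgoal]
  have hMn : 0 < d + L := by omega
  have hdd : (0:ℝ) < (d:ℝ) := by exact_mod_cast hd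
  have hMr1 : (d:ℝ) + 1 ≤ ((d+L:ℕ):ℝ) := by
    push_cast
    have : (1:ℝ) ≤ (L:ℝ) := by exact_mod_cast hL
    linarith
  have hMr0 : (0:ℝ) < ((d+L:ℕ):ℝ) := by exact_mod_cast hMn
  have hMz : (0:ℤ) < ((d+L:ℕ):ℤ) := by exact_mod_cast hMn
  set Z : ℂ := ∑ l : Fin d, cE (d+L) (t l) with hZdef
  set β : ℝ := Z.arg with hβdef
  set φ : ℝ := β * ((d+L:ℕ):ℝ) / (2*Real.pi) with hφdef
  have hβφ : β = 2*Real.pi*φ/((d+L:ℕ):ℝ) := by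
    rw [hφdef]; field_simp
  set a : ℤ := ⌈φ - (d:ℝ)/2⌉ with hadef
  have ha1 : φ - (d:ℝ)/2 ≤ (a:ℝ) := Int.le_ceil _
  have ha2 : (a:ℝ) < φ - (d:ℝ)/2 + 1 := Int.ceil_lt_add_one _
  set u : Fin d → ℤ := fun l => a + d - 1 - ((a + d - 1 - t l) % ((d+L:ℕ):ℤ)) with hudef
  have hu_mod : ∀ l, t l ≡ u l [ZMOD ((d+L:ℕ):ℤ)] := by
    intro l
    have h1 : (a + (d:ℤ) - 1 - t l) % ((d+L:ℕ):ℤ) ≡ (a + d - 1 - t l) [ZMOD ((d+L:ℕ):ℤ)] :=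
      Int.emod_emod_of_dvd _ dvd_rfl
    have h2 := Int.ModEq.sub (Int.ModEq.refl (a + (d:ℤ) - 1)) h1
    rw [show a + (d:ℤ) - 1 - (a + d - 1 - t l) = t l by ring] at h2
    exact h2.symm
  have hu_bounds : ∀ l, a + d - ((d+L:ℕ):ℤ) ≤ u l ∧ u l ≤ a + d - 1 := by
    intro l
    have h1 := Int.emod_nonneg (a + (d:ℤ) - 1 - t l) hMz.ne'
    have h2 := Int.emod_lt_of_pos (a + (d:ℤ) - 1 - t l) hMz
    rw [hudef]
    constructor <;> simp only [] <;> omega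
  have hu_inj : Function.Injective u := by
    intro i j hij
    apply ht
    apply modeq_eq_of_abs_lt ((hu_mod i).trans (hij ▸ (hu_mod j).symm))
    obtain ⟨hi1, hi2⟩ := hrange i
    obtain ⟨hj1, hj2⟩ := hrange j
    rw [abs_sub_lt_iff]
    omega
  set S : Finset ℤ := Finset.image u Finset.univ with hSdef
  have hScard : S.card = d := by
    rw [hSdef, Finset.card_image_of_injective _ hu_inj, Finset.card_univ, Fintype.card_fin]
  set T : Finset ℤ := Finset.image (fun j : Fin d => a + ((j:ℕ):ℤ)) Finset.univ with hTdef
  have hg0_inj : Function.Injective (fun j : Fin d => a + ((j:ℕ):ℤ)) := by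
    intro i j hij
    simp only [add_right_inj, Nat.cast_inj] at hij
    exact Fin.ext hij
  have hTcard : T.card = d := by
    rw [hTdef, Finset.card_image_of_injective _ hg0_inj, Finset.card_univ, Fintype.card_fin]
  have hTmem : ∀ x : ℤ, x ∈ T ↔ a ≤ x ∧ x < a + d := by
    intro x
    constructor
    · intro h
      obtain ⟨j, _, rfl⟩ := Finset.mem_image.mp h
      have := j.isLt
      omega
    · rintro ⟨h1, h2⟩
      apply Finset.mem_image.mpr
      refine ⟨⟨(x - a).toNat, by omega⟩, Finset.mem_univ _, ?_⟩
      simp only []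
      omega
  set cc : ℤ → ℝ := fun x => Real.cos (2*Real.pi*((x:ℝ) - φ)/((d+L:ℕ):ℝ)) with hccdef
  have hcc : ∀ x : ℤ, cc x = Real.cos (2*Real.pi*((x:ℝ) - φ)/((d+L:ℕ):ℝ)) := fun _ => rfl
  set lam : ℝ := Real.cos (Real.pi * (d:ℝ) / ((d+L:ℕ):ℝ)) with hlamdef
  have hre : ∀ n : ℤ, (Complex.exp (((-β:ℝ):ℂ) * Complex.I) * cE (d+L) n).re = cc n := by
    intro n
    rw [re_cE (d+L) β n, hcc]
    congr 1
    rw [hβφ]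
    field_simp
  have hZu : Z = ∑ l : Fin d, cE (d+L) (u l) := by
    rw [hZdef]
    exact Finset.sum_congr rfl (fun l _ => cE_congr (d+L) hMn (hu_mod l))
  have hSbounds : ∀ y ∈ S, a + d - ((d+L:ℕ):ℤ) ≤ y ∧ y ≤ a + d - 1 := by
    intro y hy
    rw [hSdef] at hy
    obtain ⟨l, _, rfl⟩ := Finset.mem_image.mp hy
    exact hu_bounds l
  have hA : (‖Z‖ : ℝ) = ∑ x ∈ S, cc x := by
    have h1 := exp_neg_arg_mul Z
    rw [← hβdef] at h1
    calc (‖Z‖ : ℝ) = (((‖Z‖ : ℝ) : ℂ)).re := (Complex.ofReal_re _).symm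
      _ = (Complex.exp (((-β:ℝ):ℂ) * Complex.I) * Z).re := by rw [h1]
      _ = (∑ l : Fin d, Complex.exp (((-β:ℝ):ℂ) * Complex.I) * cE (d+L) (u l)).re := by
          rw [hZu, Finset.mul_sum]
      _ = ∑ l : Fin d, (Complex.exp (((-β:ℝ):ℂ) * Complex.I) * cE (d+L) (u l)).re := by
          rw [Complex.re_sum]
      _ = ∑ l : Fin d, cc (u l) := Finset.sum_congr rfl (fun l _ => hre (u l))
      _ = ∑ x ∈ S, cc x := by
          rw [hSdef, Finset.sum_image (fun i _ j _ h => hu_inj h)]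
  have hTlow : ∀ x ∈ T, lam ≤ cc x := by
    intro x hx
    obtain ⟨h1, h2⟩ := (hTmem x).mp hx
    have hx1 : (a:ℝ) ≤ (x:ℝ) := by exact_mod_cast h1
    have hx2 : (x:ℝ) ≤ (a:ℝ) + (d:ℝ) - 1 := by
      have h3 : x ≤ a + (d:ℤ) - 1 := by omega
      exact_mod_cast h3
    have habs : |(x:ℝ) - φ| ≤ (d:ℝ)/2 := abs_le.mpr ⟨by linarith, by linarith⟩
    rw [hcc x, hlamdef]
    exact cos_sep_in hdd hMr1 habs
  have hSbd : ∀ y ∈ S, y ∉ T → ((d:ℝ)/2 < φ - (y:ℝ) ∧ φ - (y:ℝ) ≤ ((d+L:ℕ):ℝ) - (d:ℝ)/2) := by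
    intro y hy hyT
    obtain ⟨hb1, hb2⟩ := hSbounds y hy
    have hnot : ¬(a ≤ y ∧ y < a + d) := fun h => hyT ((hTmem y).mpr h)
    have hy1 : y ≤ a - 1 := by omega
    have hy1r : (y:ℝ) ≤ (a:ℝ) - 1 := by exact_mod_cast hy1
    have hy2r : (a:ℝ) + (d:ℝ) - ((d+L:ℕ):ℝ) ≤ (y:ℝ) := by
      have h5 : ((a + d - ((d+L:ℕ):ℤ) : ℤ) : ℝ) ≤ (y:ℝ) := by exact_mod_cast hb1
      push_cast at h5 ⊢
      linarith
    constructor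
    · linarith
    · linarith
  have hShigh : ∀ y ∈ S, y ∉ T → cc y ≤ lam := by
    intro y hy hyT
    obtain ⟨hr1, hr2⟩ := hSbd y hy hyT
    rw [hcc y, hlamdef,
      show 2*Real.pi*((y:ℝ) - φ)/((d+L:ℕ):ℝ) = -(2*Real.pi*(φ - (y:ℝ))/((d+L:ℕ):ℝ)) by ring,
      Real.cos_neg]
    exact cos_sep_out hdd hMr1 hr1.le hr2
  have hsep := sum_sep cc lam (hScard.trans hTcard.symm) hTlow hShigh
  have hTC : ∑ x ∈ T, cc x ≤ Real.sin (Real.pi * d / (d + L)) / Real.sin (Real.pi / (d + L)) := by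
    have hTsum : ∑ x ∈ T, cc x = ∑ j : Fin d, cc (a + ((j:ℕ):ℤ)) := by
      rw [hTdef, Finset.sum_image (fun i _ j _ h => hg0_inj h)]
    have hfold : ∑ j : Fin d, cc (a + ((j:ℕ):ℤ))
        = (Complex.exp (((-β:ℝ):ℂ) * Complex.I) * ∑ j : Fin d, cE (d+L) (a + ((j:ℕ):ℤ))).re := by
      rw [Finset.mul_sum, Complex.re_sum]
      exact Finset.sum_congr rfl (fun j _ => (hre _).symm)
    have hshift : ∑ j : Fin d, cE (d+L) (a + ((j:ℕ):ℤ)) = ∑ j : Fin d, cE (d+L) ((a-1)+1+(j:ℕ)) := by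
      apply Finset.sum_congr rfl
      intro j _
      rw [show a + ((j:ℕ):ℤ) = (a-1)+1+((j:ℕ):ℤ) by ring]
    calc ∑ x ∈ T, cc x
        = (Complex.exp (((-β:ℝ):ℂ) * Complex.I) * ∑ j : Fin d, cE (d+L) (a + ((j:ℕ):ℤ))).re := by
          rw [hTsum, hfold]
      _ ≤ ‖Complex.exp (((-β:ℝ):ℂ) * Complex.I) * ∑ j : Fin d, cE (d+L) (a + ((j:ℕ):ℤ))‖ :=
          Complex.re_le_norm _
      _ = ‖∑ j : Fin d, cE (d+L) (a + ((j:ℕ):ℤ))‖ := by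
          rw [norm_mul, Complex.norm_exp_ofReal_mul_I, one_mul]
      _ = Real.sin (Real.pi * d / (d + L)) / Real.sin (Real.pi / (d + L)) := by
          rw [hshift, abs_cE_interval d L hd hL (a-1)]
  refine ⟨by rw [hA]; linarith [hsep.1], ?_, ?_⟩
  · -- equality ⟹ interval
    intro hAC
    have hSC : ∑ x ∈ S, cc x = Real.sin (Real.pi * d / (d + L)) / Real.sin (Real.pi / (d + L)) := by
      rw [← hA, hAC]
    have hST : ∑ x ∈ S, cc x = ∑ x ∈ T, cc x :=
      le_antisymm hsep.1 (by rw [hSC]; exact hTC)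
    obtain ⟨hpinS, hpinT⟩ := hsep.2 hST
    have hkcard : (S \ T).card = (T \ S).card := by
      have h1 := Finset.card_sdiff_add_card_inter S T
      have h2 := Finset.card_sdiff_add_card_inter T S
      rw [Finset.inter_comm] at h2
      omega
    have hpin_x : ∀ x ∈ T \ S, x = a ∧ (a:ℝ) = φ - (d:ℝ)/2 := by
      intro x hx
      obtain ⟨hxT, hxS⟩ := Finset.mem_sdiff.mp hx
      have hceq : cc x = lam := hpinT x hxT hxS
      obtain ⟨h1, h2⟩ := (hTmem x).mp hxT
      have hx1 : (a:ℝ) ≤ (x:ℝ) := by exact_mod_cast h1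
      have hx2 : (x:ℝ) ≤ (a:ℝ) + (d:ℝ) - 1 := by
        have h3 : x ≤ a + (d:ℤ) - 1 := by omega
        exact_mod_cast h3
      have habs : |(x:ℝ) - φ| ≤ (d:ℝ)/2 := abs_le.mpr ⟨by linarith, by linarith⟩
      rw [hcc x, hlamdef] at hceq
      have habs2 := cos_sep_in_eq hdd hMr1 habs hceq
      have hval : (x:ℝ) = φ - (d:ℝ)/2 := by
        rcases (abs_eq (by positivity : (0:ℝ) ≤ (d:ℝ)/2)).mp habs2 with h | h
        · linarith
        · linarith
      have hxa : x = a := by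
        have h4 : a = x := by rw [hadef, ← hval, Int.ceil_intCast]
        omega
      refine ⟨hxa, ?_⟩
      rw [hxa] at hval
      exact hval
    have hpin_y : ∀ y ∈ S \ T, (y:ℝ) = φ - ((d+L:ℕ):ℝ) + (d:ℝ)/2 := by
      intro y hy
      obtain ⟨hyS, hyT⟩ := Finset.mem_sdiff.mp hy
      have hceq : cc y = lam := hpinS y hyS hyT
      obtain ⟨hr1, hr2⟩ := hSbd y hyS hyT
      rw [hcc y, hlamdef,
        show 2*Real.pi*((y:ℝ) - φ)/((d+L:ℕ):ℝ) = -(2*Real.pi*(φ - (y:ℝ))/((d+L:ℕ):ℝ)) by ring,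
        Real.cos_neg] at hceq
      rcases cos_sep_out_eq hdd hMr1 hr1.le hr2 hceq with h | h
      · linarith
      · linarith
    by_cases hcase : S = T
    · refine ⟨a - 1, ?_⟩
      obtain ⟨σ, hσ⟩ := exists_perm_comp u (fun j : Fin d => a + ((j:ℕ):ℤ)) hu_inj hg0_inj
        (by rw [← hSdef, ← hTdef, hcase])
      refine ⟨σ, fun l => ?_⟩
      have h2 := hu_mod (σ l)
      rw [hσ l, show (a:ℤ) + ((l:ℕ):ℤ) = (a-1)+1+((l:ℕ):ℤ) by ring] at h2
      exact h2
    · have hTS_ne : (T \ S).Nonempty := by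
        rw [Finset.nonempty_iff_ne_empty]
        intro h
        have h0 : (S \ T).card = 0 := by rw [hkcard, h, Finset.card_empty]
        have h1 : S \ T = ∅ := Finset.card_eq_zero.mp h0
        have hsub : S ⊆ T := Finset.sdiff_eq_empty_iff_subset.mp h1
        exact hcase (Finset.eq_of_subset_of_card_le hsub (by omega))
      obtain ⟨x0, hx0⟩ := hTS_ne
      obtain ⟨hx0a, haφ⟩ := hpin_x x0 hx0
      have hTS_eq : T \ S = {a} := by
        apply Finset.eq_singleton_iff_unique_mem.mpr
        exact ⟨hx0a ▸ hx0, fun x hx => (hpin_x x hx).1⟩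
      have hSTne : (S \ T).Nonempty := by
        rw [Finset.nonempty_iff_ne_empty]
        intro h
        rw [h, Finset.card_empty, hTS_eq, Finset.card_singleton] at hkcard
        omega
      have huniq : ∀ y ∈ S \ T, y = a + d - ((d+L:ℕ):ℤ) := by
        intro y hy
        have h1 := hpin_y y hy
        have h2 : (y:ℝ) = ((a + d - ((d+L:ℕ):ℤ) : ℤ) : ℝ) := by
          push_cast
          rw [h1, haφ]
          push_cast
          ring
        exact_mod_cast h2
      have hST_eq : S \ T = {a + d - ((d+L:ℕ):ℤ)} := by
        obtain ⟨y0, hy0⟩ := hSTne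
        exact Finset.eq_singleton_iff_unique_mem.mpr ⟨(huniq y0 hy0) ▸ hy0, huniq⟩
      set g : Fin d → ℤ :=
        fun j => if (j:ℕ) + 1 = d then a + d - ((d+L:ℕ):ℤ) else a + 1 + ((j:ℕ):ℤ) with hgdef
      have hgtop : ∀ j : Fin d, (j:ℕ) + 1 = d → g j = a + d - ((d+L:ℕ):ℤ) := by
        intro j hj
        simp [hgdef, hj]
      have hgelse : ∀ j : Fin d, (j:ℕ) + 1 ≠ d → g j = a + 1 + ((j:ℕ):ℤ) := by
        intro j hj
        simp [hgdef, hj]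
      have hg_inj : Function.Injective g := by
        intro i j hij
        by_cases hi : (i:ℕ) + 1 = d <;> by_cases hj : (j:ℕ) + 1 = d
        · exact Fin.ext (by omega)
        · rw [hgtop i hi, hgelse j hj] at hij
          have := j.isLt
          omega
        · rw [hgelse i hi, hgtop j hj] at hij
          have := i.isLt
          omega
        · rw [hgelse i hi, hgelse j hj] at hij
          exact Fin.ext (by omega)
      have himg : Finset.image g Finset.univ = S := by
        apply Finset.eq_of_subset_of_card_le
        · intro z hz
          obtain ⟨j, _, rfl⟩ := Finset.mem_image.mp hz
          by_cases hj : (j:ℕ) + 1 = d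
          · rw [hgtop j hj]
            have hm : a + d - ((d+L:ℕ):ℤ) ∈ S \ T := by
              rw [hST_eq]
              exact Finset.mem_singleton_self _
            exact (Finset.mem_sdiff.mp hm).1
          · rw [hgelse j hj]
            have hmemT : a + 1 + ((j:ℕ):ℤ) ∈ T := (hTmem _).mpr ⟨by omega, by
              have := j.isLt
              omega⟩
            have hne : a + 1 + ((j:ℕ):ℤ) ∉ ({a} : Finset ℤ) := by
              simp only [Finset.mem_singleton]
              omega
            have hmm : a + 1 + ((j:ℕ):ℤ) ∈ T \ (T \ S) := by
              rw [hTS_eq]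
              exact Finset.mem_sdiff.mpr ⟨hmemT, hne⟩
            rw [Finset.sdiff_sdiff_self_left] at hmm
            exact Finset.mem_of_mem_inter_right hmm
        · rw [hScard, Finset.card_image_of_injective _ hg_inj, Finset.card_univ, Fintype.card_fin]
      obtain ⟨σ, hσ⟩ := exists_perm_comp u g hu_inj hg_inj (by rw [← hSdef, himg])
      refine ⟨a, σ, fun l => ?_⟩
      have h2 := hu_mod (σ l)
      rw [hσ l] at h2
      by_cases hl : (l:ℕ) + 1 = d
      · rw [hgtop l hl] at h2
        have hmod : a + (d:ℤ) - ((d+L:ℕ):ℤ) ≡ a + 1 + ((l:ℕ):ℤ) [ZMOD ((d+L:ℕ):ℤ)] := by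
          have hdvd : ((d+L:ℕ):ℤ) ∣ (a + 1 + ((l:ℕ):ℤ)) - (a + (d:ℤ) - ((d+L:ℕ):ℤ)) := by
            have hld : ((l:ℕ):ℤ) = (d:ℤ) - 1 := by omega
            rw [hld]
            exact ⟨1, by ring⟩
          exact Int.modEq_iff_dvd.mpr hdvd
        exact h2.trans hmod
      · rw [hgelse l hl] at h2
        exact h2
  · -- interval ⟹ equality
    rintro ⟨s, σ, hcong⟩
    have hZs : Z = ∑ j : Fin d, cE (d+L) (s+1+(j:ℕ)) := by
      rw [hZdef, ← Equiv.sum_comp σ (fun l => cE (d+L) (t l))]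
      exact Finset.sum_congr rfl (fun j _ => cE_congr (d+L) hMn (hcong j))
    rw [hZs, abs_cE_interval d L hd hL s]
end
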